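/- (Discrete Poincaré inequality for reversible chains) Let P be a reversible ergodic transition matrix with stationary distribution π on a finite graph, and fix for every ordered pair (x,y) of distinct vertices a canonical path γ_{xy} using each edge at most once. Define Q(e) = π_{e₁}P_{e₁e₂} for each edge e, |γ_{xy}| = Σ_{e∈γ_{xy}} 1/Q(e), and κ = max_e Σ_{γ_{xy} ∋ e} |γ_{xy}| π_x π_y. Then the spectral gap of P satisfies 1 − λ₂(P) ≥ 1/κ. -/

import Mathlib

open Matrix

/-- The weighted length `|γ_{xy}| = Σ_{e∈γ_{xy}} 1/Q(e)` of a canonical path,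
where `Q(x,y) = π_x P_{xy}` is the flow across an edge. -/
noncomputable def pathWeight {V : Type*} {G : SimpleGraph V}
    (P : Matrix V V ℝ) (π : V → ℝ) {x y : V} (w : G.Walk x y) : ℝ :=
  (w.darts.map (fun d => (π d.toProd.1 * P d.toProd.1 d.toProd.2)⁻¹)).sum

/-- The Poincaré constant `κ = max_e Σ_{γ_{xy} ∋ e} |γ_{xy}| π_x π_y` for a family of
canonical paths `Γ`. -/
noncomputable def poincareConst {V : Type*} [Fintype V] [DecidableEq V]
    (G : SimpleGraph V) (P : Matrix V V ℝ) (π : V → ℝ)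
    (Γ : ∀ x y : V, G.Walk x y) : ℝ :=
  sSup {c : ℝ | ∃ e ∈ G.edgeSet,
    c = ∑ x, ∑ y, if x ≠ y ∧ e ∈ (Γ x y).edges
      then pathWeight P π (Γ x y) * π x * π y else 0}

open Finset in
/-- Telescoping sum of differences along a walk. -/
lemma walk_telescope' {V : Type*} {G : SimpleGraph V} (f : V → ℝ) :
    ∀ {x y : V} (w : G.Walk x y),
      (w.darts.map (fun d => f d.toProd.1 - f d.toProd.2)).sum = f x - f y
  | _, _, SimpleGraph.Walk.nil => by simp
  | x, y, SimpleGraph.Walk.cons h p => by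
      simp only [SimpleGraph.Walk.darts_cons, List.map_cons, List.sum_cons,
        walk_telescope' f p]
      ring

/-- Cauchy–Schwarz along a list. -/
lemma list_cauchy' {α : Type*} (l : List α) (q a : α → ℝ) (hq : ∀ d ∈ l, 0 < q d) :
    (l.map a).sum ^ 2 ≤ (l.map (fun d => (q d)⁻¹)).sum * (l.map (fun d => q d * a d ^ 2)).sum := by
  have key : ∀ (g : α → ℝ), (l.map g).sum = ∑ i : Fin l.length, g (l.get i) := by
    intro g
    conv_lhs => rw [← List.ofFn_get l, List.map_ofFn]
    exact List.sum_ofFn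
  rw [key, key, key]
  have h := Finset.sum_mul_sq_le_sq_mul_sq Finset.univ
      (fun i : Fin l.length => (Real.sqrt (q (l.get i)))⁻¹)
      (fun i : Fin l.length => Real.sqrt (q (l.get i)) * a (l.get i))
  have hpos : ∀ i : Fin l.length, 0 < q (l.get i) := fun i => hq _ (l.get_mem i)
  calc (∑ i : Fin l.length, a (l.get i)) ^ 2
      = (∑ i : Fin l.length,
          (Real.sqrt (q (l.get i)))⁻¹ * (Real.sqrt (q (l.get i)) * a (l.get i))) ^ 2 := by
        congr 1
        refine Finset.sum_congr rfl fun i _ => ?_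
        rw [← mul_assoc, inv_mul_cancel₀ (Real.sqrt_ne_zero'.2 (hpos i)), one_mul]
    _ ≤ (∑ i : Fin l.length, ((Real.sqrt (q (l.get i)))⁻¹) ^ 2) *
        ∑ i : Fin l.length, (Real.sqrt (q (l.get i)) * a (l.get i)) ^ 2 := h
    _ = (∑ i : Fin l.length, (q (l.get i))⁻¹) *
        ∑ i : Fin l.length, q (l.get i) * a (l.get i) ^ 2 := by
        congr 1 <;> refine Finset.sum_congr rfl fun i _ => ?_
        · rw [← Real.sqrt_inv, Real.sq_sqrt (inv_nonneg.2 (hpos i).le)]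
        · rw [mul_pow, Real.sq_sqrt (hpos i).le]

open Finset in
/-- Summing a function of the edge over all darts counts each edge twice. -/
lemma dart_sum_eq_twice_edge_sum {V : Type*} [Fintype V] [DecidableEq V]
    (G : SimpleGraph V) [DecidableRel G.Adj] (F : Sym2 V → ℝ) :
    ∑ d : G.Dart, F d.edge = 2 * ∑ e ∈ G.edgeFinset, F e := by
  rw [← Finset.sum_fiberwise_of_maps_to' (g := SimpleGraph.Dart.edge) (t := G.edgeFinset)
    (fun d _ => by rw [SimpleGraph.mem_edgeFinset]; exact d.edge_mem) F]
  rw [Finset.mul_sum]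
  refine Finset.sum_congr rfl fun e he => ?_
  rw [Finset.sum_const, nsmul_eq_mul]
  congr 1
  have := G.dart_edge_fiber_card e (SimpleGraph.mem_edgeFinset.1 he)
  exact_mod_cast this

open Finset in
/-- A double sum over adjacent ordered pairs is a sum over darts. -/
lemma adj_double_sum_eq_dart_sum {V : Type*} [Fintype V] [DecidableEq V]
    (G : SimpleGraph V) [DecidableRel G.Adj] (g : V → V → ℝ) :
    ∑ x, ∑ y, (if G.Adj x y then g x y else 0) = ∑ d : G.Dart, g d.toProd.1 d.toProd.2 := by
  rw [← Finset.sum_product', ← Finset.sum_filter]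
  refine (Finset.sum_bij' (fun (d : G.Dart) _ => d.toProd)
    (fun p hp => ⟨p, (Finset.mem_filter.1 hp).2⟩) ?_ ?_ ?_ ?_ ?_).symm <;> simp

open Finset in
/-- Diaconis–Stroock's Poincaré inequality: for a reversible ergodic transition matrix
`P` with stationary distribution `π` and any choice of canonical paths (each using
every edge at most once, along edges of positive transition probability), the spectral
gap satisfies `1 − λ₂ ≥ 1/κ`. -/
theorem stmt_13 {V : Type*} [Fintype V] [DecidableEq V]
    (G : SimpleGraph V) [DecidableRel G.Adj] (hG : G.Connected)
    (P : Matrix V V ℝ) (hnonneg : ∀ x y, 0 ≤ P x y)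
    (hstoch : ∀ x, ∑ y, P x y = 1)
    (hsupp : ∀ x y, x ≠ y → ¬G.Adj x y → P x y = 0)
    (π : V → ℝ) (hπpos : ∀ x, 0 < π x) (hπsum : ∑ x, π x = 1)
    (hstat : ∀ y, ∑ x, π x * P x y = π y)
    (hrev : ∀ x y, π x * P x y = π y * P y x)
    (hergodic : ∀ x y, ∃ N : ℕ, ∀ s, N ≤ s → 0 < (P ^ s) x y)
    (Γ : ∀ x y : V, G.Walk x y)
    (htrail : ∀ x y, (Γ x y).IsTrail)
    (hQpos : ∀ x y, ∀ d ∈ (Γ x y).darts, 0 < P d.toProd.1 d.toProd.2)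
    (lam₂ : ℝ) (hlam₂ : IsGreatest {μ | μ ∈ spectrum ℝ P ∧ μ ≠ 1} lam₂) :
    1 - lam₂ ≥ 1 / poincareConst G P π Γ := by
  obtain ⟨⟨hspec, hne⟩, -⟩ := hlam₂
  -- Extract an eigenvector for lam₂.
  rw [spectrum.mem_iff, Matrix.isUnit_iff_isUnit_det, isUnit_iff_ne_zero, not_not] at hspec
  obtain ⟨f, hf0, hf⟩ := Matrix.exists_mulVec_eq_zero_iff.2 hspec
  have heig : ∀ x, ∑ y, P x y * f y = lam₂ * f x := by
    intro x
    have h1 := congrFun hf x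
    rw [Matrix.sub_mulVec, Algebra.algebraMap_eq_smul_one, Matrix.smul_mulVec,
      Matrix.one_mulVec] at h1
    have h2 : lam₂ * f x - (P *ᵥ f) x = 0 := h1
    have h3 : (P *ᵥ f) x = ∑ y, P x y * f y := by simp [Matrix.mulVec, dotProduct]
    linarith [h3.symm ▸ h2]
  obtain ⟨z, hz⟩ : ∃ z, f z ≠ 0 := by
    by_contra h; push_neg at h; exact hf0 (funext fun v => h v)
  -- lam₂ < 1 by the maximum principle.
  obtain ⟨x₀, -, hx₀⟩ := Finset.exists_max_image Finset.univ (fun v => |f v|) ⟨z, mem_univ z⟩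
  have hfx₀pos : 0 < |f x₀| := lt_of_lt_of_le (abs_pos.2 hz) (hx₀ z (mem_univ z))
  have habs : |lam₂| * |f x₀| ≤ 1 * |f x₀| := by
    rw [← abs_mul, ← heig x₀, one_mul]
    calc |∑ y, P x₀ y * f y| ≤ ∑ y, |P x₀ y * f y| := Finset.abs_sum_le_sum_abs _ _
      _ = ∑ y, P x₀ y * |f y| := Finset.sum_congr rfl fun y _ => by
          rw [abs_mul, abs_of_nonneg (hnonneg _ _)]
      _ ≤ ∑ y, P x₀ y * |f x₀| := Finset.sum_le_sum fun y _ =>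
          mul_le_mul_of_nonneg_left (hx₀ y (mem_univ y)) (hnonneg _ _)
      _ = |f x₀| := by rw [← Finset.sum_mul, hstoch, one_mul]
  have hlt : lam₂ < 1 :=
    lt_of_le_of_ne (le_trans (le_abs_self _) (le_of_mul_le_mul_right habs hfx₀pos)) hne
  -- mean zero
  have h1 : lam₂ * (∑ x, π x * f x) = ∑ x, π x * f x := by
    calc lam₂ * ∑ x, π x * f x = ∑ x, π x * (lam₂ * f x) := by
          rw [Finset.mul_sum]; exact Finset.sum_congr rfl fun x _ => by ring
      _ = ∑ x, ∑ y, π x * P x y * f y := by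
          refine Finset.sum_congr rfl fun x _ => ?_
          rw [← heig x, Finset.mul_sum]
          exact Finset.sum_congr rfl fun y _ => by ring
      _ = ∑ y, ∑ x, π x * P x y * f y := Finset.sum_comm
      _ = ∑ y, π y * f y := by
          refine Finset.sum_congr rfl fun y _ => ?_
          rw [← Finset.sum_mul, hstat]
  have hmean : ∑ x, π x * f x = 0 := by
    rcases mul_eq_zero.1 (show (lam₂ - 1) * (∑ x, π x * f x) = 0 by
      rw [sub_mul, one_mul, h1, sub_self]) with h | h
    · exact absurd (by linarith [sub_eq_zero.1 h]) hne
    · exact h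
  set S2 : ℝ := ∑ x, π x * f x ^ 2 with hS2def
  have hS2pos : 0 < S2 := by
    refine Finset.sum_pos' (fun x _ => mul_nonneg (hπpos x).le (sq_nonneg _)) ⟨z, mem_univ z, ?_⟩
    exact mul_pos (hπpos z) (lt_of_le_of_ne (sq_nonneg _) (Ne.symm (pow_ne_zero 2 hz)))
  -- the symmetric edge function F
  have hFsymm : ∀ a b : V, π a * P a b * (f a - f b) ^ 2 = π b * P b a * (f b - f a) ^ 2 :=
    fun a b => by rw [hrev a b]; ring
  obtain ⟨F, hFmk⟩ : ∃ F : Sym2 V → ℝ, ∀ a b : V, F s(a, b) = π a * P a b * (f a - f b) ^ 2 :=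
    ⟨Sym2.lift ⟨fun a b => π a * P a b * (f a - f b) ^ 2, hFsymm⟩,
      fun a b => Sym2.lift_mk _ a b⟩
  have hFd : ∀ d : G.Dart, F d.edge = π d.toProd.1 * P d.toProd.1 d.toProd.2 *
      (f d.toProd.1 - f d.toProd.2) ^ 2 := fun d => hFmk d.toProd.1 d.toProd.2
  have hFnn : ∀ e : Sym2 V, 0 ≤ F e := fun e => by
    refine Sym2.ind (fun a b => ?_) e
    rw [hFmk]
    exact mul_nonneg (mul_nonneg (hπpos a).le (hnonneg a b)) (sq_nonneg _)
  -- Dirichlet form identity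
  have hDir : ∑ x, ∑ y, π x * P x y * (f x - f y) ^ 2 = 2 * (1 - lam₂) * S2 := by
    have e1 : ∀ x y : V, π x * P x y * (f x - f y) ^ 2 =
        π x * P x y * f x ^ 2 - 2 * (π x * f x) * (P x y * f y) + π x * P x y * f y ^ 2 :=
      fun x y => by ring
    have T1 : ∑ x, ∑ y, π x * P x y * f x ^ 2 = S2 := by
      refine Finset.sum_congr rfl fun x _ => ?_
      calc ∑ y, π x * P x y * f x ^ 2 = π x * f x ^ 2 * ∑ y, P x y := by
            rw [Finset.mul_sum]; exact Finset.sum_congr rfl fun y _ => by ring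
        _ = π x * f x ^ 2 := by rw [hstoch, mul_one]
    have T2 : ∑ x, ∑ y, 2 * (π x * f x) * (P x y * f y) = 2 * lam₂ * S2 := by
      calc ∑ x, ∑ y, 2 * (π x * f x) * (P x y * f y)
          = ∑ x, 2 * (π x * f x) * (lam₂ * f x) := by
            refine Finset.sum_congr rfl fun x _ => ?_
            rw [← heig x, Finset.mul_sum]
        _ = 2 * lam₂ * S2 := by
            rw [hS2def, Finset.mul_sum]
            exact Finset.sum_congr rfl fun x _ => by ring
    have T3 : ∑ x, ∑ y, π x * P x y * f y ^ 2 = S2 := by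
      rw [Finset.sum_comm]
      refine Finset.sum_congr rfl fun y _ => ?_
      calc ∑ x, π x * P x y * f y ^ 2 = (∑ x, π x * P x y) * f y ^ 2 := by
            rw [Finset.sum_mul]
        _ = π y * f y ^ 2 := by rw [hstat]
    calc ∑ x, ∑ y, π x * P x y * (f x - f y) ^ 2
        = ∑ x, ((∑ y, π x * P x y * f x ^ 2) - (∑ y, 2 * (π x * f x) * (P x y * f y))
            + ∑ y, π x * P x y * f y ^ 2) := by
          refine Finset.sum_congr rfl fun x _ => ?_
          rw [Finset.sum_congr rfl fun y _ => e1 x y, Finset.sum_add_distrib,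
            Finset.sum_sub_distrib]
      _ = (∑ x, ∑ y, π x * P x y * f x ^ 2) - (∑ x, ∑ y, 2 * (π x * f x) * (P x y * f y))
            + ∑ x, ∑ y, π x * P x y * f y ^ 2 := by
          rw [Finset.sum_add_distrib, Finset.sum_sub_distrib]
      _ = 2 * (1 - lam₂) * S2 := by rw [T1, T2, T3]; ring
  -- Variance identity
  have hVar : ∑ x, ∑ y, π x * π y * (f x - f y) ^ 2 = 2 * S2 := by
    have e1 : ∀ x y : V, π x * π y * (f x - f y) ^ 2 =
        π x * f x ^ 2 * π y - 2 * (π x * f x) * (π y * f y) + π x * (π y * f y ^ 2) :=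
      fun x y => by ring
    have T1 : ∑ x, ∑ y, π x * f x ^ 2 * π y = S2 := by
      refine Finset.sum_congr rfl fun x _ => ?_
      rw [← Finset.mul_sum, hπsum, mul_one]
    have T2 : ∑ x, ∑ y, 2 * (π x * f x) * (π y * f y) = 0 := by
      have : ∀ x, ∑ y, 2 * (π x * f x) * (π y * f y) = 0 := fun x => by
        rw [← Finset.mul_sum, hmean, mul_zero]
      rw [Finset.sum_congr rfl fun x _ => this x, Finset.sum_const, smul_zero]
    have T3 : ∑ x, ∑ y, π x * (π y * f y ^ 2) = S2 := by
      calc ∑ x, ∑ y, π x * (π y * f y ^ 2) = ∑ x, π x * S2 := by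
            refine Finset.sum_congr rfl fun x _ => ?_
            rw [← Finset.mul_sum, ← hS2def]
        _ = S2 := by rw [← Finset.sum_mul, hπsum, one_mul]
    calc ∑ x, ∑ y, π x * π y * (f x - f y) ^ 2
        = ∑ x, ((∑ y, π x * f x ^ 2 * π y) - (∑ y, 2 * (π x * f x) * (π y * f y))
            + ∑ y, π x * (π y * f y ^ 2)) := by
          refine Finset.sum_congr rfl fun x _ => ?_
          rw [Finset.sum_congr rfl fun y _ => e1 x y, Finset.sum_add_distrib,
            Finset.sum_sub_distrib]
      _ = (∑ x, ∑ y, π x * f x ^ 2 * π y) - (∑ x, ∑ y, 2 * (π x * f x) * (π y * f y))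
            + ∑ x, ∑ y, π x * (π y * f y ^ 2) := by
          rw [Finset.sum_add_distrib, Finset.sum_sub_distrib]
      _ = 2 * S2 := by rw [T1, T2, T3]; ring
  -- Edge sum equals Dirichlet form
  have hES : ∑ e ∈ G.edgeFinset, F e = (1 - lam₂) * S2 := by
    have hAdj : ∑ x, ∑ y, π x * P x y * (f x - f y) ^ 2 =
        ∑ x, ∑ y, (if G.Adj x y then π x * P x y * (f x - f y) ^ 2 else 0) := by
      refine Finset.sum_congr rfl fun x _ => Finset.sum_congr rfl fun y _ => ?_
      by_cases h : G.Adj x y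
      · rw [if_pos h]
      · rw [if_neg h]
        by_cases hxy : x = y
        · subst hxy; simp
        · rw [hsupp x y hxy h]; ring
    have hdart : ∑ x, ∑ y, (if G.Adj x y then π x * P x y * (f x - f y) ^ 2 else 0) =
        ∑ d : G.Dart, F d.edge := by
      rw [adj_double_sum_eq_dart_sum G (fun x y => π x * P x y * (f x - f y) ^ 2)]
      exact Finset.sum_congr rfl fun d _ => (hFd d).symm
    have := hDir
    rw [hAdj, hdart, dart_sum_eq_twice_edge_sum] at this
    linarith
  -- Cauchy–Schwarz along each canonical path
  have hCS : ∀ x y : V, (f x - f y) ^ 2 ≤ pathWeight P π (Γ x y) *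
      ∑ e ∈ G.edgeFinset, (if e ∈ (Γ x y).edges then F e else 0) := by
    intro x y
    have h1 := walk_telescope' f (Γ x y)
    have h2 := list_cauchy' (Γ x y).darts
      (fun d => π d.toProd.1 * P d.toProd.1 d.toProd.2)
      (fun d => f d.toProd.1 - f d.toProd.2)
      (fun d hd => mul_pos (hπpos _) (hQpos x y d hd))
    rw [h1] at h2
    refine h2.trans_eq ?_
    congr 1
    calc ((Γ x y).darts.map (fun d => π d.toProd.1 * P d.toProd.1 d.toProd.2 *
            (f d.toProd.1 - f d.toProd.2) ^ 2)).sum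
        = ((Γ x y).edges.map F).sum := by
          rw [show (Γ x y).edges = (Γ x y).darts.map SimpleGraph.Dart.edge from rfl,
            List.map_map]
          congr 1
          exact List.map_congr_left fun d _ => (hFd d).symm
      _ = ∑ e ∈ (Γ x y).edges.toFinset, F e :=
          (List.sum_toFinset F (htrail x y).edges_nodup).symm
      _ = ∑ e ∈ G.edgeFinset.filter (· ∈ (Γ x y).edges), F e := by
          congr 1
          ext e
          simp only [List.mem_toFinset, Finset.mem_filter, SimpleGraph.mem_edgeFinset]
          exact ⟨fun h => ⟨(Γ x y).edges_subset_edgeSet h, h⟩, fun h => h.2⟩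
      _ = ∑ e ∈ G.edgeFinset, (if e ∈ (Γ x y).edges then F e else 0) := Finset.sum_filter _ _
  -- Main chain
  set κ := poincareConst G P π Γ with hκdef
  have hcoeff : ∀ e ∈ G.edgeFinset,
      (∑ x, ∑ y, if x ≠ y ∧ e ∈ (Γ x y).edges
        then pathWeight P π (Γ x y) * π x * π y else 0) ≤ κ := by
    intro e he
    have hbdd : BddAbove {c : ℝ | ∃ e ∈ G.edgeSet,
        c = ∑ x, ∑ y, if x ≠ y ∧ e ∈ (Γ x y).edges
          then pathWeight P π (Γ x y) * π x * π y else 0} := by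
      have : {c : ℝ | ∃ e ∈ G.edgeSet,
          c = ∑ x, ∑ y, if x ≠ y ∧ e ∈ (Γ x y).edges
            then pathWeight P π (Γ x y) * π x * π y else 0} =
          (fun e => ∑ x, ∑ y, if x ≠ y ∧ e ∈ (Γ x y).edges
            then pathWeight P π (Γ x y) * π x * π y else 0) '' G.edgeSet := by
        ext c
        simp only [Set.mem_setOf_eq, Set.mem_image]
        constructor
        · rintro ⟨e, he, rfl⟩; exact ⟨e, he, rfl⟩
        · rintro ⟨e, he, rfl⟩; exact ⟨e, he, rfl⟩
      rw [this]
      exact ((Set.toFinite G.edgeSet).image _).bddAbove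
    exact le_csSup hbdd ⟨e, SimpleGraph.mem_edgeFinset.1 he, rfl⟩
  have step1 : 2 * S2 ≤ ∑ x, ∑ y, (if x ≠ y
      then (pathWeight P π (Γ x y) * π x * π y) *
        (∑ e ∈ G.edgeFinset, if e ∈ (Γ x y).edges then F e else 0) else 0) := by
    rw [← hVar]
    refine Finset.sum_le_sum fun x _ => Finset.sum_le_sum fun y _ => ?_
    by_cases hxy : x = y
    · subst hxy; simp
    · rw [if_pos hxy]
      calc π x * π y * (f x - f y) ^ 2
          ≤ π x * π y * (pathWeight P π (Γ x y) *
              ∑ e ∈ G.edgeFinset, (if e ∈ (Γ x y).edges then F e else 0)) :=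
            mul_le_mul_of_nonneg_left (hCS x y)
              (mul_nonneg (hπpos x).le (hπpos y).le)
        _ = (pathWeight P π (Γ x y) * π x * π y) *
              (∑ e ∈ G.edgeFinset, if e ∈ (Γ x y).edges then F e else 0) := by ring
  have step2 : ∑ x, ∑ y, (if x ≠ y
      then (pathWeight P π (Γ x y) * π x * π y) *
        (∑ e ∈ G.edgeFinset, if e ∈ (Γ x y).edges then F e else 0) else 0) =
      ∑ e ∈ G.edgeFinset, (∑ x, ∑ y, if x ≠ y ∧ e ∈ (Γ x y).edges
        then pathWeight P π (Γ x y) * π x * π y else 0) * F e := by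
    have perxy : ∀ x y : V, (if x ≠ y
        then (pathWeight P π (Γ x y) * π x * π y) *
          (∑ e ∈ G.edgeFinset, if e ∈ (Γ x y).edges then F e else 0) else 0) =
        ∑ e ∈ G.edgeFinset, (if x ≠ y ∧ e ∈ (Γ x y).edges
          then (pathWeight P π (Γ x y) * π x * π y) * F e else 0) := by
      intro x y
      by_cases hxy : x = y
      · subst hxy
        simp
      · rw [if_pos hxy, Finset.mul_sum]
        refine Finset.sum_congr rfl fun e _ => ?_
        by_cases he : e ∈ (Γ x y).edges
        · rw [if_pos he, if_pos ⟨hxy, he⟩]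
        · rw [if_neg he, if_neg (fun h => he h.2), mul_zero]
    calc ∑ x, ∑ y, (if x ≠ y
        then (pathWeight P π (Γ x y) * π x * π y) *
          (∑ e ∈ G.edgeFinset, if e ∈ (Γ x y).edges then F e else 0) else 0)
        = ∑ x, ∑ y, ∑ e ∈ G.edgeFinset, (if x ≠ y ∧ e ∈ (Γ x y).edges
            then (pathWeight P π (Γ x y) * π x * π y) * F e else 0) := by
          exact Finset.sum_congr rfl fun x _ => Finset.sum_congr rfl fun y _ => perxy x y
      _ = ∑ e ∈ G.edgeFinset, ∑ x, ∑ y, (if x ≠ y ∧ e ∈ (Γ x y).edges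
            then (pathWeight P π (Γ x y) * π x * π y) * F e else 0) :=
          (Finset.sum_congr rfl fun x _ => Finset.sum_comm).trans Finset.sum_comm
      _ = ∑ e ∈ G.edgeFinset, (∑ x, ∑ y, if x ≠ y ∧ e ∈ (Γ x y).edges
            then pathWeight P π (Γ x y) * π x * π y else 0) * F e := by
          refine Finset.sum_congr rfl fun e _ => ?_
          rw [Finset.sum_mul]
          refine Finset.sum_congr rfl fun x _ => ?_
          rw [Finset.sum_mul]
          refine Finset.sum_congr rfl fun y _ => ?_
          rw [ite_mul, zero_mul]
  have step3 : ∑ e ∈ G.edgeFinset, (∑ x, ∑ y, if x ≠ y ∧ e ∈ (Γ x y).edges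
      then pathWeight P π (Γ x y) * π x * π y else 0) * F e ≤
      κ * ∑ e ∈ G.edgeFinset, F e := by
    rw [Finset.mul_sum]
    exact Finset.sum_le_sum fun e he =>
      mul_le_mul_of_nonneg_right (hcoeff e he) (hFnn e)
  have hfinal : 2 * S2 ≤ κ * ((1 - lam₂) * S2) := by
    calc 2 * S2 ≤ _ := step1
      _ = _ := step2
      _ ≤ κ * ∑ e ∈ G.edgeFinset, F e := step3
      _ = κ * ((1 - lam₂) * S2) := by rw [hES]
  have hgap : 0 < 1 - lam₂ := by linarith
  have hX : 0 < (1 - lam₂) * S2 := mul_pos hgap hS2pos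
  have hκpos : 0 < κ := by
    by_contra h
    push_neg at h
    have h2 := mul_le_mul_of_nonneg_right h hX.le
    rw [zero_mul] at h2
    linarith
  rw [ge_iff_le, div_le_iff₀ hκpos]
  nlinarith
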